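/- Let n ∈ ℕ, c₁, c₂ ∈ [0,1), θ ∈ ℝ, Λ ∈ ℝ \ {0}, and let L, ν, μ : ℝ² → ℝ be smooth ℤ²-periodic functions with L > 0 everywhere. Set α = dx − nz·dy and γ = dz − θ·dy, and define the smooth field g̃ of symmetric bilinear forms on ℝ³ by g̃ = Λ(α⊗γ + γ⊗α) + L(y,z)²·dy⊗dy + ν(y,z)(dy⊗γ + γ⊗dy) + μ(y,z)·γ⊗γ (equivalently, the Gram matrix of g̃ in the frame (∂x, ∂y + nz∂x + θ∂z, ∂z) is [[0,0,Λ],[0,L²,ν],[Λ,ν,μ]]). Then: (i) at every point of ℝ³, g̃ is nondegenerate of Lorentzian signature (2,1); (ii) g̃ is invariant under Γ_{n,c₁,c₂}, i.e. φ*g̃ = g̃ for every φ ∈ Γ_{n,c₁,c₂}; (iii) g̃(∂x, ∂x) = 0 and the 1-form g̃(∂x, ·) equals Λ(dz − θdy), which is closed; (iv) g̃ is invariant under every translation (x,y,z) ↦ (x+s, y, z). -/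

import Mathlib

noncomputable section


/-- The bijection `(x,y,z) ↦ (x + φ(y,z), y + ψ(z), z + b)` of `ℝ³`. -/
def affMap (φ : ℝ × ℝ → ℝ) (ψ : ℝ → ℝ) (b : ℝ) : Equiv.Perm (ℝ × ℝ × ℝ) where
  toFun p := (p.1 + φ p.2, p.2.1 + ψ p.2.2, p.2.2 + b)
  invFun p := (p.1 - φ (p.2.1 - ψ (p.2.2 - b), p.2.2 - b), p.2.1 - ψ (p.2.2 - b), p.2.2 - b)
  left_inv := by rintro ⟨x, y, z⟩; simp
  right_inv := by rintro ⟨x, y, z⟩; simp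

/-- The group `Γ_{n,c₁,c₂}`, generated by `(x,y,z) ↦ (x+1,y,z)`,
`(x,y,z) ↦ (x+c₁,y+1,z)` and `(x,y,z) ↦ (x+ny+c₂,y,z+1)`. -/
def Gamma (n : ℕ) (c₁ c₂ : ℝ) : Subgroup (Equiv.Perm (ℝ × ℝ × ℝ)) :=
  Subgroup.closure
    { affMap (fun _ => 1) (fun _ => 0) 0,
      affMap (fun _ => c₁) (fun _ => 1) 0,
      affMap (fun q => n * q.1 + c₂) (fun _ => 0) 1 }

/-- The field of symmetric bilinear forms
`g̃ = Λ(α⊗γ + γ⊗α) + L²·dy⊗dy + ν(dy⊗γ + γ⊗dy) + μ·γ⊗γ`, where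
`α = dx − nz·dy` and `γ = dz − θ·dy`. -/
def gNine (n : ℕ) (θ Λ : ℝ) (L ν μ : ℝ × ℝ → ℝ) (p u v : ℝ × ℝ × ℝ) : ℝ :=
  Λ * ((u.1 - n * p.2.2 * u.2.1) * (v.2.2 - θ * v.2.1)
      + (u.2.2 - θ * u.2.1) * (v.1 - n * p.2.2 * v.2.1))
    + (L p.2) ^ 2 * u.2.1 * v.2.1
    + ν p.2 * (u.2.1 * (v.2.2 - θ * v.2.1) + (u.2.2 - θ * u.2.1) * v.2.1)
    + μ p.2 * ((u.2.2 - θ * u.2.1) * (v.2.2 - θ * v.2.1))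


def gForm (nr θ Λ z Lw νw μw : ℝ) (u v : ℝ × ℝ × ℝ) : ℝ :=
  Λ * ((u.1 - nr * z * u.2.1) * (v.2.2 - θ * v.2.1)
      + (u.2.2 - θ * u.2.1) * (v.1 - nr * z * v.2.1))
    + Lw ^ 2 * u.2.1 * v.2.1
    + νw * (u.2.1 * (v.2.2 - θ * v.2.1) + (u.2.2 - θ * u.2.1) * v.2.1)
    + μw * ((u.2.2 - θ * u.2.1) * (v.2.2 - θ * v.2.1))

variable (nr θ Λ z Lw νw μw : ℝ)

lemma gForm_add_left (u u' v : ℝ×ℝ×ℝ) : gForm nr θ Λ z Lw νw μw (u + u') v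
    = gForm nr θ Λ z Lw νw μw u v + gForm nr θ Λ z Lw νw μw u' v := by
  simp only [gForm, Prod.fst_add, Prod.snd_add]; ring
lemma gForm_smul_left (c : ℝ) (u v : ℝ×ℝ×ℝ) : gForm nr θ Λ z Lw νw μw (c • u) v
    = c * gForm nr θ Λ z Lw νw μw u v := by
  simp only [gForm, Prod.smul_fst, Prod.smul_snd, smul_eq_mul]; ring
lemma gForm_symm (u v : ℝ×ℝ×ℝ) : gForm nr θ Λ z Lw νw μw u v = gForm nr θ Λ z Lw νw μw v u := by
  simp only [gForm]; ring
lemma gForm_zero_left (v : ℝ×ℝ×ℝ) : gForm nr θ Λ z Lw νw μw 0 v = 0 := by simp [gForm]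


lemma gram_core (hΛ : Λ ≠ 0) (hL0 : Lw ≠ 0) (σ k t : ℝ)
    (hσΛ : σ * Λ = |Λ|) (hk : k ^ 2 * (σ * Λ) * 2 = 1)
    (ht : t = (νw ^ 2 / Lw ^ 2 - μw) / (2 * Λ)) :
    ∃ v : Fin 3 → ℝ×ℝ×ℝ, LinearIndependent ℝ v ∧ ∀ i j : Fin 3,
      gForm nr θ Λ z Lw νw μw (v i) (v j)
        = if i = j then (if (i : ℕ) < 2 then 1 else -1) else 0 := by
  obtain ⟨X, hX⟩ : ∃ X : ℝ×ℝ×ℝ, X = ((1:ℝ),0,0) := ⟨_, rfl⟩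
  obtain ⟨Y1, hY1⟩ : ∃ Y : ℝ×ℝ×ℝ, Y = (nr*z/Lw, 1/Lw, θ/Lw) := ⟨_, rfl⟩
  obtain ⟨Zq, hZq⟩ : ∃ Z : ℝ×ℝ×ℝ,
      Z = (t - νw*(nr*z)/Lw^2, -νw/Lw^2, 1 - νw*θ/Lw^2) := ⟨_, rfl⟩
  have hXX : gForm nr θ Λ z Lw νw μw X X = 0 := by
    simp only [gForm, hX]; ring
  have hXY : gForm nr θ Λ z Lw νw μw X Y1 = 0 := by
    simp only [gForm, hX, hY1]; field_simp [hΛ, hL0]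
    all_goals first | ring | exact Or.inl trivial
    all_goals first | ring | exact Or.inl trivial
  have hYY : gForm nr θ Λ z Lw νw μw Y1 Y1 = 1 := by
    simp only [gForm, hY1]; field_simp [hΛ, hL0]
    all_goals first | ring | exact Or.inl trivial
  have hXZ : gForm nr θ Λ z Lw νw μw X Zq = Λ := by
    simp only [gForm, hX, hZq]; field_simp [hΛ, hL0]
    all_goals first | ring | exact Or.inl trivial
  have hYZ : gForm nr θ Λ z Lw νw μw Y1 Zq = 0 := by
    simp only [gForm, hY1, hZq]; field_simp [hΛ, hL0]
    all_goals first | ring | exact Or.inl trivial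
  have hZZ : gForm nr θ Λ z Lw νw μw Zq Zq = 0 := by
    simp only [gForm, hZq, ht]; field_simp [hΛ, hL0]
    all_goals first | ring | exact Or.inl trivial
  have hYX := (gForm_symm nr θ Λ z Lw νw μw Y1 X).trans hXY
  have hZX := (gForm_symm nr θ Λ z Lw νw μw Zq X).trans hXZ
  have hZY := (gForm_symm nr θ Λ z Lw νw μw Zq Y1).trans hYZ
  have hsub : ∀ u u' v : ℝ×ℝ×ℝ, gForm nr θ Λ z Lw νw μw (u - u') v
      = gForm nr θ Λ z Lw νw μw u v - gForm nr θ Λ z Lw νw μw u' v := by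
    intro u u' v; simp only [gForm, Prod.fst_sub, Prod.snd_sub]; ring
  have hsubr : ∀ u v v' : ℝ×ℝ×ℝ, gForm nr θ Λ z Lw νw μw u (v - v')
      = gForm nr θ Λ z Lw νw μw u v - gForm nr θ Λ z Lw νw μw u v' := by
    intro u v v'; simp only [gForm, Prod.fst_sub, Prod.snd_sub]; ring
  have haddr : ∀ u v v' : ℝ×ℝ×ℝ, gForm nr θ Λ z Lw νw μw u (v + v')
      = gForm nr θ Λ z Lw νw μw u v + gForm nr θ Λ z Lw νw μw u v' := by
    intro u v v'; simp only [gForm, Prod.fst_add, Prod.snd_add]; ring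
  have hsmulr : ∀ (c : ℝ) (u v : ℝ×ℝ×ℝ), gForm nr θ Λ z Lw νw μw u (c • v)
      = c * gForm nr θ Λ z Lw νw μw u v := by
    intro c u v; simp only [gForm, Prod.smul_fst, Prod.smul_snd, smul_eq_mul]; ring
  obtain ⟨e0, he0⟩ : ∃ e : ℝ×ℝ×ℝ, e = k • (X + σ • Zq) := ⟨_, rfl⟩
  obtain ⟨e2, he2⟩ : ∃ e : ℝ×ℝ×ℝ, e = k • (X - σ • Zq) := ⟨_, rfl⟩
  have h00 : gForm nr θ Λ z Lw νw μw e0 e0 = 1 := by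
    rw [he0, gForm_smul_left, hsmulr, gForm_add_left, haddr, haddr, gForm_smul_left,
      gForm_smul_left, hsmulr, hsmulr, hXX, hXZ, hZX, hZZ]
    linear_combination hk
  have h22 : gForm nr θ Λ z Lw νw μw e2 e2 = -1 := by
    rw [he2, gForm_smul_left, hsmulr, hsub, hsubr, hsubr, gForm_smul_left,
      gForm_smul_left, hsmulr, hsmulr, hXX, hXZ, hZX, hZZ]
    linear_combination -hk
  have h02 : gForm nr θ Λ z Lw νw μw e0 e2 = 0 := by
    rw [he0, he2, gForm_smul_left, hsmulr, gForm_add_left, hsubr, hsubr, gForm_smul_left,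
      gForm_smul_left, hsmulr, hsmulr, hXX, hXZ, hZX, hZZ]
    ring
  have h20 : gForm nr θ Λ z Lw νw μw e2 e0 = 0 := by
    rw [he0, he2, gForm_smul_left, hsmulr, hsub, haddr, haddr, gForm_smul_left,
      gForm_smul_left, hsmulr, hsmulr, hXX, hXZ, hZX, hZZ]
    ring
  have h01 : gForm nr θ Λ z Lw νw μw e0 Y1 = 0 := by
    rw [he0, gForm_smul_left, gForm_add_left, gForm_smul_left, hXY, hZY]; ring
  have h10 : gForm nr θ Λ z Lw νw μw Y1 e0 = 0 := by
    rw [he0, hsmulr, haddr, hsmulr, hYX, hYZ]; ring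
  have h21 : gForm nr θ Λ z Lw νw μw e2 Y1 = 0 := by
    rw [he2, gForm_smul_left, hsub, gForm_smul_left, hXY, hZY]; ring
  have h12 : gForm nr θ Λ z Lw νw μw Y1 e2 = 0 := by
    rw [he2, hsmulr, hsubr, hsmulr, hYX, hYZ]; ring
  refine ⟨![e0, Y1, e2], ?_, ?_⟩
  · rw [Fintype.linearIndependent_iff]
    intro c hc
    rw [Fin.sum_univ_three] at hc
    simp only [Matrix.cons_val_zero, Matrix.cons_val_one, Matrix.head_cons,
      Matrix.cons_val_two, Matrix.tail_cons] at hc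
    have key : ∀ w : ℝ×ℝ×ℝ,
        c 0 * gForm nr θ Λ z Lw νw μw e0 w + c 1 * gForm nr θ Λ z Lw νw μw Y1 w
          + c 2 * gForm nr θ Λ z Lw νw μw e2 w = 0 := by
      intro w
      have h0 : gForm nr θ Λ z Lw νw μw (c 0 • e0 + c 1 • Y1 + c 2 • e2) w = 0 := by
        rw [hc]; exact gForm_zero_left nr θ Λ z Lw νw μw w
      rw [gForm_add_left, gForm_add_left, gForm_smul_left, gForm_smul_left,
        gForm_smul_left] at h0
      linarith [h0]
    intro i
    fin_cases i
    · have := key e0; rw [h00, h10, h20] at this; simpa using this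
    · have := key Y1; rw [h01, hYY, h21] at this; simpa using this
    · have := key e2; rw [h02, h12, h22] at this; simpa using this
  · intro i j
    fin_cases i <;> fin_cases j <;>
      simp [Matrix.cons_val_zero, Matrix.cons_val_one, Matrix.head_cons,
        Matrix.cons_val_two, Matrix.tail_cons, h00, h01, h02, h10, hYY, h12, h20, h21, h22]


def shearMap (a : ℝ) : (ℝ×ℝ×ℝ) →L[ℝ] (ℝ×ℝ×ℝ) :=
  ((ContinuousLinearMap.fst ℝ ℝ (ℝ×ℝ)) +
    a • ((ContinuousLinearMap.fst ℝ ℝ ℝ).comp (ContinuousLinearMap.snd ℝ ℝ (ℝ×ℝ)))).prod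
    (ContinuousLinearMap.snd ℝ ℝ (ℝ×ℝ))

lemma shearMap_apply (a : ℝ) (u : ℝ×ℝ×ℝ) : shearMap a u = (u.1 + a * u.2.1, u.2.1, u.2.2) := rfl

lemma aff_hasFDeriv (a b e f : ℝ) (F : (ℝ×ℝ×ℝ) → (ℝ×ℝ×ℝ))
    (hF : ∀ p, F p = (p.1 + a*p.2.1 + b, p.2.1 + e, p.2.2 + f)) (p : ℝ×ℝ×ℝ) :
    HasFDerivAt F (shearMap a) p := by
  have h := ((shearMap a).hasFDerivAt (x := p)).add_const (b, e, f)
  have : F = fun q => shearMap a q + (b, e, f) := by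
    funext q; rw [hF q, shearMap_apply]; rfl
  rw [this]; exact h

lemma gNine_aff_invariant (n : ℕ) (θ Λ a b e f : ℝ) (L ν μ : ℝ×ℝ→ℝ)
    (ha : a = n * f)
    (hL : ∀ w : ℝ×ℝ, L (w.1 + e, w.2 + f) = L w)
    (hν : ∀ w : ℝ×ℝ, ν (w.1 + e, w.2 + f) = ν w)
    (hμ : ∀ w : ℝ×ℝ, μ (w.1 + e, w.2 + f) = μ w)
    (F : (ℝ×ℝ×ℝ) → (ℝ×ℝ×ℝ))
    (hF : ∀ p, F p = (p.1 + a*p.2.1 + b, p.2.1 + e, p.2.2 + f)) :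
    Differentiable ℝ F ∧ ∀ p u v,
      gNine n θ Λ L ν μ (F p) (fderiv ℝ F p u) (fderiv ℝ F p v)
        = gNine n θ Λ L ν μ p u v := by
  refine ⟨fun p => (aff_hasFDeriv a b e f F hF p).differentiableAt, fun p u v => ?_⟩
  rw [(aff_hasFDeriv a b e f F hF p).fderiv, hF p]
  have hL' := hL p.2; have hν' := hν p.2; have hμ' := hμ p.2
  simp only [gNine, shearMap_apply, hL', hν', hμ']
  subst ha; ring

lemma mk3_ext {a b c d e f : ℝ} (h1 : a = d) (h2 : b = e) (h3 : c = f) :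
    ((a, b, c) : ℝ × ℝ × ℝ) = (d, e, f) := by subst h1 h2 h3; rfl

def QI (n : ℕ) (θ Λ : ℝ) (L ν μ : ℝ × ℝ → ℝ) (F : (ℝ×ℝ×ℝ) → (ℝ×ℝ×ℝ)) : Prop :=
  Differentiable ℝ F ∧ ∀ p u v : ℝ×ℝ×ℝ,
    gNine n θ Λ L ν μ (F p) (fderiv ℝ F p u) (fderiv ℝ F p v) = gNine n θ Λ L ν μ p u v

lemma QI_id (n : ℕ) (θ Λ : ℝ) (L ν μ : ℝ × ℝ → ℝ) : QI n θ Λ L ν μ id := by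
  refine ⟨differentiable_id, fun p u v => ?_⟩
  rw [fderiv_id]
  rfl

lemma QI_comp (n : ℕ) (θ Λ : ℝ) (L ν μ : ℝ × ℝ → ℝ) (F G : (ℝ×ℝ×ℝ) → (ℝ×ℝ×ℝ))
    (hF : QI n θ Λ L ν μ F) (hG : QI n θ Λ L ν μ G) : QI n θ Λ L ν μ (F ∘ G) := by
  refine ⟨hF.1.comp hG.1, fun p u v => ?_⟩
  rw [fderiv_comp p (hF.1.differentiableAt) (hG.1.differentiableAt)]
  simp only [Function.comp_apply, ContinuousLinearMap.coe_comp']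
  rw [hF.2, hG.2]

/-- Basic properties of the metric `g̃` of Proposition `fibres`: at every point it is
nondegenerate of Lorentzian signature `(2,1)`; it is `Γ_{n,c₁,c₂}`-invariant; `∂x` is
lightlike and `g̃(∂x, ·) = Λ(dz − θ dy)`, a closed 1-form; and `g̃` is invariant under
all translations in the `x`-direction. -/
theorem stmt_9 (n : ℕ) (c₁ c₂ : ℝ)
    (hc₁ : c₁ ∈ Set.Ico (0 : ℝ) 1) (hc₂ : c₂ ∈ Set.Ico (0 : ℝ) 1)
    (θ Λ : ℝ) (hΛ : Λ ≠ 0)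
    (L ν μ : ℝ × ℝ → ℝ)
    (hLs : ContDiff ℝ (⊤ : ℕ∞) L) (hνs : ContDiff ℝ (⊤ : ℕ∞) ν)
    (hμs : ContDiff ℝ (⊤ : ℕ∞) μ)
    (hLpos : ∀ w : ℝ × ℝ, 0 < L w)
    (hLper : ∀ y z : ℝ, L (y + 1, z) = L (y, z) ∧ L (y, z + 1) = L (y, z))
    (hνper : ∀ y z : ℝ, ν (y + 1, z) = ν (y, z) ∧ ν (y, z + 1) = ν (y, z))
    (hμper : ∀ y z : ℝ, μ (y + 1, z) = μ (y, z) ∧ μ (y, z + 1) = μ (y, z)) :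
    (∀ p : ℝ × ℝ × ℝ,
      (∃ e : Module.Basis (Fin 3) ℝ (ℝ × ℝ × ℝ), ∀ i j : Fin 3,
        gNine n θ Λ L ν μ p (e i) (e j)
          = if i = j then (if (i : ℕ) < 2 then 1 else -1) else 0) ∧
      (∀ u : ℝ × ℝ × ℝ, (∀ v : ℝ × ℝ × ℝ, gNine n θ Λ L ν μ p u v = 0) → u = 0)) ∧
    (∀ φ ∈ Gamma n c₁ c₂, ∀ p u v : ℝ × ℝ × ℝ,
      gNine n θ Λ L ν μ (φ p) (fderiv ℝ (⇑φ) p u) (fderiv ℝ (⇑φ) p v)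
        = gNine n θ Λ L ν μ p u v) ∧
    (∀ p : ℝ × ℝ × ℝ, gNine n θ Λ L ν μ p (1, 0, 0) (1, 0, 0) = 0) ∧
    (∀ p v : ℝ × ℝ × ℝ, gNine n θ Λ L ν μ p (1, 0, 0) v = Λ * (v.2.2 - θ * v.2.1)) ∧
    (∀ p u v : ℝ × ℝ × ℝ,
      fderiv ℝ (fun q => gNine n θ Λ L ν μ q (1, 0, 0) v) p u
        = fderiv ℝ (fun q => gNine n θ Λ L ν μ q (1, 0, 0) u) p v) ∧
    (∀ s : ℝ, ∀ p u v : ℝ × ℝ × ℝ,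
      gNine n θ Λ L ν μ (p.1 + s, p.2) u v = gNine n θ Λ L ν μ p u v) := by
  have habs : (0:ℝ) < 2*|Λ| := by positivity
  obtain ⟨σ, hσΛ⟩ : ∃ σ : ℝ, σ * Λ = |Λ| := by
    rcases lt_or_gt_of_ne hΛ with h | h
    · exact ⟨-1, by rw [abs_of_neg h]; ring⟩
    · exact ⟨1, by rw [abs_of_pos h]; ring⟩
  have hk : ((Real.sqrt (2*|Λ|))⁻¹) ^ 2 * (σ * Λ) * 2 = 1 := by
    rw [hσΛ, inv_pow, Real.sq_sqrt habs.le]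
    field_simp
    try ring
  have hrepr : ∀ p u v : ℝ×ℝ×ℝ,
      gNine n θ Λ L ν μ p u v = gForm n θ Λ p.2.2 (L p.2) (ν p.2) (μ p.2) u v :=
    fun _ _ _ => rfl
  refine ⟨?_, ?_, ?_, ?_, ?_, ?_⟩
  · -- (i) signature and nondegeneracy
    intro p
    constructor
    · obtain ⟨v, li, hGram⟩ := gram_core n θ Λ p.2.2 (L p.2) (ν p.2) (μ p.2) hΛ
        (hLpos p.2).ne' σ _ _ hσΛ hk rfl
      have hcard : Fintype.card (Fin 3) = Module.finrank ℝ (ℝ×ℝ×ℝ) := by simp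
      refine ⟨basisOfLinearIndependentOfCardEqFinrank li hcard, fun i j => ?_⟩
      rw [coe_basisOfLinearIndependentOfCardEqFinrank, hrepr]
      exact hGram i j
    · intro u hu
      have h1 : Λ * ((u.1 - n * p.2.2 * u.2.1) * (0 - θ * 0)
            + (u.2.2 - θ * u.2.1) * (1 - n * p.2.2 * 0))
          + (L p.2)^2 * u.2.1 * 0
          + ν p.2 * (u.2.1 * (0 - θ * 0) + (u.2.2 - θ * u.2.1) * 0)
          + μ p.2 * ((u.2.2 - θ * u.2.1) * (0 - θ * 0)) = 0 := hu (1,0,0)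
      have h2 : Λ * ((u.1 - n * p.2.2 * u.2.1) * (0 - θ * 1)
            + (u.2.2 - θ * u.2.1) * (0 - n * p.2.2 * 1))
          + (L p.2)^2 * u.2.1 * 1
          + ν p.2 * (u.2.1 * (0 - θ * 1) + (u.2.2 - θ * u.2.1) * 1)
          + μ p.2 * ((u.2.2 - θ * u.2.1) * (0 - θ * 1)) = 0 := hu (0,1,0)
      have h3 : Λ * ((u.1 - n * p.2.2 * u.2.1) * (1 - θ * 0)
            + (u.2.2 - θ * u.2.1) * (0 - n * p.2.2 * 0))
          + (L p.2)^2 * u.2.1 * 0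
          + ν p.2 * (u.2.1 * (1 - θ * 0) + (u.2.2 - θ * u.2.1) * 0)
          + μ p.2 * ((u.2.2 - θ * u.2.1) * (1 - θ * 0)) = 0 := hu (0,0,1)
      have hD : u.2.2 - θ * u.2.1 = 0 := by
        rcases mul_eq_zero.mp (show Λ * (u.2.2 - θ * u.2.1) = 0 by linear_combination h1)
          with h | h
        · exact absurd h hΛ
        · exact h
      have hL2 : (L p.2) ^ 2 ≠ 0 := pow_ne_zero 2 (hLpos p.2).ne'
      have hu2 : u.2.1 = 0 := by
        rcases mul_eq_zero.mp (show (L p.2)^2 * u.2.1 = 0 by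
          linear_combination h2 + θ * h3 + (Λ * (n * p.2.2) - ν p.2) * hD) with h | h
        · exact absurd h hL2
        · exact h
      have hu1 : u.1 = 0 := by
        rcases mul_eq_zero.mp (show Λ * u.1 = 0 by
          linear_combination h3 - μ p.2 * hD + (Λ * (n * p.2.2) - ν p.2) * hu2) with h | h
        · exact absurd h hΛ
        · exact h
      have hu3 : u.2.2 = 0 := by linear_combination hD + θ * hu2
      exact Prod.ext hu1 (Prod.ext hu2 hu3)
  · -- (ii) Γ-invariance
    intro φ hφ p u v
    have hL0 : ∀ w : ℝ×ℝ, L (w.1 + 0, w.2 + 0) = L w := by intro w; simp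
    have hν0 : ∀ w : ℝ×ℝ, ν (w.1 + 0, w.2 + 0) = ν w := by intro w; simp
    have hμ0 : ∀ w : ℝ×ℝ, μ (w.1 + 0, w.2 + 0) = μ w := by intro w; simp
    have hL10 : ∀ w : ℝ×ℝ, L (w.1 + 1, w.2 + 0) = L w := by
      intro w; simpa using (hLper w.1 w.2).1
    have hν10 : ∀ w : ℝ×ℝ, ν (w.1 + 1, w.2 + 0) = ν w := by
      intro w; simpa using (hνper w.1 w.2).1
    have hμ10 : ∀ w : ℝ×ℝ, μ (w.1 + 1, w.2 + 0) = μ w := by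
      intro w; simpa using (hμper w.1 w.2).1
    have hL01 : ∀ w : ℝ×ℝ, L (w.1 + 0, w.2 + 1) = L w := by
      intro w; simpa using (hLper w.1 w.2).2
    have hν01 : ∀ w : ℝ×ℝ, ν (w.1 + 0, w.2 + 1) = ν w := by
      intro w; simpa using (hνper w.1 w.2).2
    have hμ01 : ∀ w : ℝ×ℝ, μ (w.1 + 0, w.2 + 1) = μ w := by
      intro w; simpa using (hμper w.1 w.2).2
    have hLm10 : ∀ w : ℝ×ℝ, L (w.1 + (-1), w.2 + 0) = L w := by
      intro w
      have h := (hLper (w.1 - 1) w.2).1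
      rw [show w.1 - 1 + 1 = w.1 by ring] at h
      simpa [sub_eq_add_neg] using h.symm
    have hνm10 : ∀ w : ℝ×ℝ, ν (w.1 + (-1), w.2 + 0) = ν w := by
      intro w
      have h := (hνper (w.1 - 1) w.2).1
      rw [show w.1 - 1 + 1 = w.1 by ring] at h
      simpa [sub_eq_add_neg] using h.symm
    have hμm10 : ∀ w : ℝ×ℝ, μ (w.1 + (-1), w.2 + 0) = μ w := by
      intro w
      have h := (hμper (w.1 - 1) w.2).1
      rw [show w.1 - 1 + 1 = w.1 by ring] at h
      simpa [sub_eq_add_neg] using h.symm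
    have hL0m1 : ∀ w : ℝ×ℝ, L (w.1 + 0, w.2 + (-1)) = L w := by
      intro w
      have h := (hLper w.1 (w.2 - 1)).2
      rw [show w.2 - 1 + 1 = w.2 by ring] at h
      simpa [sub_eq_add_neg] using h.symm
    have hν0m1 : ∀ w : ℝ×ℝ, ν (w.1 + 0, w.2 + (-1)) = ν w := by
      intro w
      have h := (hνper w.1 (w.2 - 1)).2
      rw [show w.2 - 1 + 1 = w.2 by ring] at h
      simpa [sub_eq_add_neg] using h.symm
    have hμ0m1 : ∀ w : ℝ×ℝ, μ (w.1 + 0, w.2 + (-1)) = μ w := by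
      intro w
      have h := (hμper w.1 (w.2 - 1)).2
      rw [show w.2 - 1 + 1 = w.2 by ring] at h
      simpa [sub_eq_add_neg] using h.symm
    have main : QI n θ Λ L ν μ ⇑φ ∧ QI n θ Λ L ν μ ⇑(φ⁻¹) := by
      refine Subgroup.closure_induction
        (p := fun (ψ : Equiv.Perm (ℝ×ℝ×ℝ)) _ => QI n θ Λ L ν μ ⇑ψ ∧ QI n θ Λ L ν μ ⇑(ψ⁻¹)) ?_ ?_ ?_ ?_ hφ
      · intro x hx
        rcases hx with rfl | rfl | rfl
        · constructor
          · exact gNine_aff_invariant n θ Λ 0 1 0 0 L ν μ (by push_cast; ring)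
              hL0 hν0 hμ0 _ (fun p => mk3_ext (by ring) (by ring) (by ring))
          · exact gNine_aff_invariant n θ Λ 0 (-1) 0 0 L ν μ (by push_cast; ring)
              hL0 hν0 hμ0 _ (fun p => mk3_ext (by ring) (by ring) (by ring))
        · constructor
          · exact gNine_aff_invariant n θ Λ 0 c₁ 1 0 L ν μ (by push_cast; ring)
              hL10 hν10 hμ10 _ (fun p => mk3_ext (by ring) (by ring) (by ring))
          · exact gNine_aff_invariant n θ Λ 0 (-c₁) (-1) 0 L ν μ (by push_cast; ring)
              hLm10 hνm10 hμm10 _ (fun p => mk3_ext (by ring) (by ring) (by ring))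
        · constructor
          · exact gNine_aff_invariant n θ Λ n c₂ 0 1 L ν μ (by push_cast; ring)
              hL01 hν01 hμ01 _ (fun p => mk3_ext (by ring) (by ring) (by ring))
          · exact gNine_aff_invariant n θ Λ (-(n:ℝ)) (-c₂) 0 (-1) L ν μ (by push_cast; ring)
              hL0m1 hν0m1 hμ0m1 _ (fun p => mk3_ext (by ring) (by ring) (by ring))
      · constructor
        · exact QI_id n θ Λ L ν μ
        · simpa using QI_id n θ Λ L ν μ
      · intro x y _ _ hx hy
        constructor
        · exact QI_comp n θ Λ L ν μ ⇑x ⇑y hx.1 hy.1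
        · rw [mul_inv_rev]
          exact QI_comp n θ Λ L ν μ ⇑(y⁻¹) ⇑(x⁻¹) hy.2 hx.2
      · intro x _ hx
        refine ⟨hx.2, ?_⟩
        rw [inv_inv]
        exact hx.1
    exact main.1.2 p u v
  · -- (iii)
    intro p
    show Λ * ((1 - n * p.2.2 * 0) * (0 - θ * 0) + (0 - θ * 0) * (1 - n * p.2.2 * 0))
        + (L p.2)^2 * 0 * 0 + ν p.2 * (0 * (0 - θ * 0) + (0 - θ * 0) * 0)
        + μ p.2 * ((0 - θ * 0) * (0 - θ * 0)) = 0
    ring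
  · -- (iv)
    intro p v
    show Λ * ((1 - n * p.2.2 * 0) * (v.2.2 - θ * v.2.1) + (0 - θ * 0) * (v.1 - n * p.2.2 * v.2.1))
        + (L p.2)^2 * 0 * v.2.1 + ν p.2 * (0 * (v.2.2 - θ * v.2.1) + (0 - θ * 0) * v.2.1)
        + μ p.2 * ((0 - θ * 0) * (v.2.2 - θ * v.2.1)) = Λ * (v.2.2 - θ * v.2.1)
    ring
  · -- (v) closedness
    intro p u v
    have hcv : (fun q : ℝ×ℝ×ℝ => gNine n θ Λ L ν μ q (1,0,0) v)
        = fun _ => Λ * (v.2.2 - θ * v.2.1) := by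
      funext q
      show Λ * ((1 - n * q.2.2 * 0) * (v.2.2 - θ * v.2.1) + (0 - θ * 0) * (v.1 - n * q.2.2 * v.2.1))
          + (L q.2)^2 * 0 * v.2.1 + ν q.2 * (0 * (v.2.2 - θ * v.2.1) + (0 - θ * 0) * v.2.1)
          + μ q.2 * ((0 - θ * 0) * (v.2.2 - θ * v.2.1)) = Λ * (v.2.2 - θ * v.2.1)
      ring
    have hcu : (fun q : ℝ×ℝ×ℝ => gNine n θ Λ L ν μ q (1,0,0) u)
        = fun _ => Λ * (u.2.2 - θ * u.2.1) := by
      funext q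
      show Λ * ((1 - n * q.2.2 * 0) * (u.2.2 - θ * u.2.1) + (0 - θ * 0) * (u.1 - n * q.2.2 * u.2.1))
          + (L q.2)^2 * 0 * u.2.1 + ν q.2 * (0 * (u.2.2 - θ * u.2.1) + (0 - θ * 0) * u.2.1)
          + μ q.2 * ((0 - θ * 0) * (u.2.2 - θ * u.2.1)) = Λ * (u.2.2 - θ * u.2.1)
      ring
    rw [hcv, hcu, fderiv_fun_const]
    simp
  · -- (vi)
    intro s p u v
    rfl
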